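/- Let A be an n×n real upper-triangular matrix all of whose diagonal entries are equal to λ with λ > 1, let R be a positive integer with λ < 2^R, and let Ω ≥ 0. Then there exist positive reals Δ_1, …, Δ_n and a function g : ℝⁿ → ℝⁿ, each of whose n coordinate functions takes at most 2^R distinct values, such that for every disturbance sequence w : ℕ → ℝⁿ with |w_t(i)| ≤ Ω/2 for all t and all i, the closed-loop trajectory defined by x_0 = 0 and x_{t+1} = A·x_t + g(x_t) + w_t satisfies |x_t(i)| ≤ Δ_i/2 for all t ∈ ℕ and all coordinates i. -/

import Mathlib

noncomputable def qlevel (M : ℝ) (N : ℕ) (k : ℕ) : ℝ := -M + (2 * k + 1) * M / N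

noncomputable def quant (M : ℝ) (N : ℕ) (x : ℝ) : ℝ :=
  qlevel M N (min (⌊(x + M) * N / (2 * M)⌋.toNat) (N - 1))

lemma quant_mem {M : ℝ} {N : ℕ} (hN : 0 < N) (x : ℝ) :
    quant M N x ∈ (Finset.range N).image (qlevel M N) := by
  apply Finset.mem_image_of_mem
  simp only [Finset.mem_range]
  omega

lemma quant_err {M : ℝ} {N : ℕ} (hM : 0 < M) (hN : 0 < N) {x : ℝ} (hx : |x| ≤ M) :
    |x - quant M N x| ≤ M / N := by
  have hxl : -M ≤ x := (abs_le.mp hx).1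
  have hxu : x ≤ M := (abs_le.mp hx).2
  have hNR : (0:ℝ) < N := by exact_mod_cast hN
  have h2M : (0:ℝ) < 2 * M := by linarith
  set t : ℝ := (x + M) * N / (2 * M) with ht
  have ht0 : 0 ≤ t := by
    apply div_nonneg _ h2M.le
    have : (0:ℝ) ≤ x + M := by linarith
    positivity
  have htN : t ≤ N := by
    rw [ht, div_le_iff₀ h2M]
    nlinarith
  set k : ℕ := min (⌊t⌋.toNat) (N - 1) with hk
  have hfl0 : 0 ≤ ⌊t⌋ := Int.floor_nonneg.mpr ht0
  have hk1 : (k : ℝ) ≤ t := by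
    have h1 : (k : ℤ) ≤ ⌊t⌋ := by
      have := min_le_left (⌊t⌋.toNat) (N - 1)
      omega
    calc (k : ℝ) ≤ (⌊t⌋ : ℝ) := by exact_mod_cast h1
      _ ≤ t := Int.floor_le t
  have hk2 : t ≤ (k : ℝ) + 1 := by
    rcases le_or_gt (⌊t⌋.toNat) (N - 1) with h | h
    · have hk' : k = ⌊t⌋.toNat := min_eq_left h
      have hlt1 : t < (⌊t⌋ : ℝ) + 1 := Int.lt_floor_add_one t
      have hc : ((⌊t⌋.toNat : ℕ) : ℝ) = ((⌊t⌋ : ℤ) : ℝ) := by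
        exact_mod_cast Int.toNat_of_nonneg hfl0
      rw [hk', hc]
      linarith
    · have hk' : k = N - 1 := min_eq_right h.le
      have hNk : (k : ℝ) + 1 = N := by
        rw [hk']
        have : (N - 1 : ℕ) + 1 = N := by omega
        exact_mod_cast congrArg (Nat.cast : ℕ → ℝ) this
      linarith
  have hq : quant M N x = -M + (2 * k + 1) * M / N := rfl
  have hxt : x + M = t * (2 * M) / N := by
    rw [ht]
    field_simp
  have hdiff : x - quant M N x = (M / N) * (2 * t - 2 * k - 1) := by
    rw [hq]
    have : x = t * (2 * M) / N - M := by linarith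
    rw [this]
    field_simp
    ring
  rw [hdiff, abs_mul]
  have habs1 : |2 * t - 2 * (k:ℝ) - 1| ≤ 1 := by
    rw [abs_le]; constructor <;> linarith
  have hMN : |M / N| = M / N := abs_of_pos (by positivity)
  rw [hMN]
  calc M / N * |2 * t - 2 * (k:ℝ) - 1| ≤ M / N * 1 := by
        apply mul_le_mul_of_nonneg_left habs1 (by positivity)
    _ = M / N := mul_one _

theorem jordan_block_noiseless_stabilization (n : ℕ) (lam : ℝ) (hlam : 1 < lam)
    (A : Matrix (Fin n) (Fin n) ℝ)
    (hupper : ∀ i j : Fin n, j < i → A i j = 0)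
    (hdiag : ∀ i : Fin n, A i i = lam)
    (R : ℕ) (hR : 0 < R) (hlt : lam < 2 ^ R) (Ω : ℝ) (hΩ : 0 ≤ Ω) :
    ∃ Δ : Fin n → ℝ, (∀ i, 0 < Δ i) ∧
      ∃ g : (Fin n → ℝ) → (Fin n → ℝ),
        (∀ i : Fin n, ∃ s : Finset ℝ, s.card ≤ 2 ^ R ∧ ∀ x, g x i ∈ s) ∧
        ∀ w : ℕ → (Fin n → ℝ), (∀ t i, |w t i| ≤ Ω / 2) →
          ∀ x : ℕ → (Fin n → ℝ), x 0 = 0 →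
            (∀ t, x (t + 1) = A.mulVec (x t) + g (x t) + w t) →
            ∀ t i, |x t i| ≤ Δ i / 2 := by
  classical
  obtain ⟨N, hNdef⟩ : ∃ N : ℕ, N = 2 ^ R := ⟨_, rfl⟩
  have hN : 0 < N := by rw [hNdef]; positivity
  have hNR : (N : ℝ) = 2 ^ R := by rw [hNdef]; push_cast; ring
  have hN1 : (1:ℝ) ≤ (N:ℝ) := by rw [hNR]; exact one_le_pow₀ (by norm_num)
  have hNpos : (0:ℝ) < (N:ℝ) := by linarith
  obtain ⟨C, hCdef⟩ : ∃ C : ℝ, C = ∑ i, ∑ j, |A i j| := ⟨_, rfl⟩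
  have hC0 : 0 ≤ C := by rw [hCdef]; positivity
  have hCij : ∀ i j, |A i j| ≤ C := by
    intro i j
    have h1 : |A i j| ≤ ∑ j', |A i j'| :=
      Finset.single_le_sum (f := fun j' => |A i j'|) (fun j' _ => abs_nonneg _) (Finset.mem_univ j)
    have h2 : (∑ j', |A i j'|) ≤ ∑ i', ∑ j', |A i' j'| :=
      Finset.single_le_sum (f := fun i' => ∑ j', |A i' j'|)
        (fun i' _ => Finset.sum_nonneg fun j' _ => abs_nonneg _) (Finset.mem_univ i)
    rw [hCdef]; linarith
  obtain ⟨δ, hδdef⟩ : ∃ δ : ℝ, δ = 1 - lam / N := ⟨_, rfl⟩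
  have hδ : 0 < δ := by
    rw [hδdef]
    have : lam / N < 1 := by
      rw [div_lt_one hNpos, hNR]; exact hlt
    linarith
  have hδ1 : δ ≤ 1 := by
    rw [hδdef]
    have : 0 < lam / N := by positivity
    linarith
  obtain ⟨B, hBdef⟩ : ∃ B : ℝ, B = 1 + (2 * C + 1) / δ := ⟨_, rfl⟩
  have hB1 : 1 < B := by
    rw [hBdef]
    have : 0 < (2 * C + 1) / δ := by positivity
    linarith
  have hB0 : 0 < B := by linarith
  obtain ⟨K, hKdef⟩ : ∃ K : ℝ, K = 2 * (Ω + 1) / δ := ⟨_, rfl⟩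
  have hK : 0 < K := by rw [hKdef]; positivity
  obtain ⟨Δ, hΔdef⟩ : ∃ Δ : Fin n → ℝ, Δ = fun i => K * B ^ (n - 1 - i.val) := ⟨_, rfl⟩
  have hΔi : ∀ i, Δ i = K * B ^ (n - 1 - i.val) := fun i => by rw [hΔdef]
  have hΔpos : ∀ i, 0 < Δ i := fun i => by rw [hΔi i]; positivity
  -- sum bound
  have hSbound : ∀ i : Fin n,
      C * ∑ j ∈ Finset.univ.filter (fun j => i < j), Δ j ≤ (δ / 2) * Δ i := by
    intro i
    set S : Finset (Fin n) := Finset.univ.filter (fun j => i < j) with hSdef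
    have hinj : ∀ j ∈ S, ∀ j' ∈ S, n - 1 - j.val = n - 1 - j'.val → j = j' := by
      intro j hj j' hj' h
      simp only [hSdef, Finset.mem_filter, Fin.lt_def] at hj hj'
      have hjn := j.isLt
      have hj'n := j'.isLt
      apply Fin.ext
      omega
    have hsum1 : ∑ j ∈ S, B ^ (n - 1 - j.val) = ∑ m ∈ S.image (fun j => n - 1 - j.val), B ^ m :=
      (Finset.sum_image hinj).symm
    have hsub : S.image (fun j => n - 1 - j.val) ⊆ Finset.range (n - 1 - i.val) := by
      intro m hm
      simp only [Finset.mem_image, hSdef, Finset.mem_filter, Fin.lt_def] at hm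
      obtain ⟨j, ⟨_, hij⟩, rfl⟩ := hm
      have := j.isLt
      have := i.isLt
      simp only [Finset.mem_range]
      omega
    have hsum2 : ∑ m ∈ S.image (fun j => n - 1 - j.val), B ^ m
        ≤ ∑ m ∈ Finset.range (n - 1 - i.val), B ^ m :=
      Finset.sum_le_sum_of_subset_of_nonneg hsub (fun m _ _ => by positivity)
    have hgeom : ∑ m ∈ Finset.range (n - 1 - i.val), B ^ m ≤ B ^ (n - 1 - i.val) / (B - 1) := by
      rw [le_div_iff₀ (by linarith)]
      have hg := geom_sum_mul B (n - 1 - i.val)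
      calc (∑ m ∈ Finset.range (n - 1 - i.val), B ^ m) * (B - 1)
          = B ^ (n - 1 - i.val) - 1 := hg
        _ ≤ B ^ (n - 1 - i.val) := by linarith
    have hSΔ : ∑ j ∈ S, Δ j = K * ∑ j ∈ S, B ^ (n - 1 - j.val) := by
      rw [Finset.mul_sum]
      apply Finset.sum_congr rfl
      intro j _
      rw [hΔi j]
    have hchain : ∑ j ∈ S, Δ j ≤ K * (B ^ (n - 1 - i.val) / (B - 1)) := by
      rw [hSΔ]
      apply mul_le_mul_of_nonneg_left _ hK.le
      calc ∑ j ∈ S, B ^ (n - 1 - j.val) = _ := hsum1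
        _ ≤ _ := hsum2
        _ ≤ _ := hgeom
    have hBm1 : B - 1 = (2 * C + 1) / δ := by rw [hBdef]; ring
    have hfrac : C / (B - 1) ≤ δ / 2 := by
      rw [hBm1, div_div_eq_mul_div, div_le_iff₀ (by positivity)]
      nlinarith [hδ, hC0]
    calc C * ∑ j ∈ S, Δ j ≤ C * (K * (B ^ (n - 1 - i.val) / (B - 1))) :=
          mul_le_mul_of_nonneg_left hchain hC0
      _ = (C / (B - 1)) * (K * B ^ (n - 1 - i.val)) := by ring
      _ ≤ (δ / 2) * (K * B ^ (n - 1 - i.val)) :=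
          mul_le_mul_of_nonneg_right hfrac (mul_pos hK (pow_pos hB0 _)).le
      _ = (δ / 2) * Δ i := by rw [hΔi i]
  -- key inequality
  have hkey : ∀ i : Fin n,
      (lam * Δ i + C * ∑ j ∈ Finset.univ.filter (fun j => i < j), Δ j) / N + Ω ≤ Δ i := by
    intro i
    obtain ⟨S2, hS2⟩ : ∃ S2 : ℝ, S2 = C * ∑ j ∈ Finset.univ.filter (fun j => i < j), Δ j :=
      ⟨_, rfl⟩
    have hS2nn : 0 ≤ S2 := by
      rw [hS2]
      exact mul_nonneg hC0 (Finset.sum_nonneg fun j _ => (hΔpos j).le)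
    have h1 : S2 ≤ (δ / 2) * Δ i := by rw [hS2]; exact hSbound i
    have h2 : Ω + 1 ≤ (δ / 2) * Δ i := by
      have hKΔ : K ≤ Δ i := by
        rw [hΔi i]
        calc K = K * 1 := (mul_one K).symm
          _ ≤ K * B ^ (n - 1 - i.val) :=
            mul_le_mul_of_nonneg_left (one_le_pow₀ hB1.le) hK.le
      have hKδ : (δ / 2) * K = Ω + 1 := by
        rw [hKdef]
        field_simp
      calc Ω + 1 = (δ / 2) * K := hKδ.symm
        _ ≤ (δ / 2) * Δ i := mul_le_mul_of_nonneg_left hKΔ (by positivity)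
    have hlamN : lam * Δ i / N = (1 - δ) * Δ i := by
      rw [hδdef]
      field_simp
      ring
    have hS2N : S2 / N ≤ S2 := by
      rw [div_le_iff₀ hNpos]
      nlinarith [hS2nn, hN1]
    have hΔpi := hΔpos i
    rw [← hS2]
    calc (lam * Δ i + S2) / N + Ω = lam * Δ i / N + S2 / N + Ω := by ring
      _ ≤ (1 - δ) * Δ i + S2 + Ω := by rw [hlamN]; linarith
      _ ≤ (1 - δ) * Δ i + (δ / 2) * Δ i + ((δ / 2) * Δ i - 1) := by linarith
      _ ≤ Δ i := by nlinarith
  obtain ⟨M, hMdef⟩ : ∃ M : Fin n → ℝ, M = fun i =>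
      (lam * Δ i + C * ∑ j ∈ Finset.univ.filter (fun j => i < j), Δ j) / 2 := ⟨_, rfl⟩
  have hMi : ∀ i, M i = (lam * Δ i + C * ∑ j ∈ Finset.univ.filter (fun j => i < j), Δ j) / 2 :=
    fun i => by rw [hMdef]
  have hMpos : ∀ i, 0 < M i := by
    intro i
    rw [hMi i]
    have h1 : 0 < lam * Δ i := mul_pos (by linarith) (hΔpos i)
    have h2 : 0 ≤ C * ∑ j ∈ Finset.univ.filter (fun j => i < j), Δ j :=
      mul_nonneg hC0 (Finset.sum_nonneg fun j _ => (hΔpos j).le)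
    linarith
  refine ⟨Δ, hΔpos, fun x i => - quant (M i) N (A.mulVec x i), ?_, ?_⟩
  · intro i
    refine ⟨(Finset.range N).image (fun k => - qlevel (M i) N k), ?_, ?_⟩
    · calc ((Finset.range N).image _).card ≤ (Finset.range N).card := Finset.card_image_le
        _ = N := Finset.card_range N
        _ ≤ 2 ^ R := by omega
    · intro x
      have hmem := quant_mem (M := M i) hN (A.mulVec x i)
      simp only [Finset.mem_image, Finset.mem_range] at hmem ⊢
      obtain ⟨k, hk, hkq⟩ := hmem
      exact ⟨k, hk, by rw [hkq]⟩
  · intro w hw x hx0 hxrec t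
    induction t with
    | zero =>
      intro i
      rw [hx0]
      simp only [Pi.zero_apply, abs_zero]
      linarith [hΔpos i]
    | succ t ih =>
      intro i
      have hrow : |A.mulVec (x t) i| ≤ M i := by
        have habs : |A.mulVec (x t) i| ≤ ∑ j, |A i j| * |x t j| := by
          rw [Matrix.mulVec, dotProduct]
          calc |∑ j, A i j * x t j| ≤ ∑ j, |A i j * x t j| := Finset.abs_sum_le_sum_abs _ _
            _ = ∑ j, |A i j| * |x t j| := by simp [abs_mul]
        have hsplit : ∑ j, |A i j| * |x t j|
            = |A i i| * |x t i| + ∑ j ∈ Finset.univ.erase i, |A i j| * |x t j| :=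
          (Finset.add_sum_erase _ _ (Finset.mem_univ i)).symm
        have hdiagbd : |A i i| * |x t i| ≤ lam * (Δ i / 2) := by
          rw [hdiag i, abs_of_pos (by linarith)]
          exact mul_le_mul_of_nonneg_left (ih i) (by linarith)
        have herase : ∑ j ∈ Finset.univ.erase i, |A i j| * |x t j|
            ≤ ∑ j ∈ Finset.univ.filter (fun j => i < j), C * (Δ j / 2) := by
          have hstep : ∑ j ∈ Finset.univ.erase i, |A i j| * |x t j|
              ≤ ∑ j ∈ Finset.univ.erase i, (if i < j then C * (Δ j / 2) else 0) := by
            apply Finset.sum_le_sum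
            intro j hj
            have hji : j ≠ i := Finset.ne_of_mem_erase hj
            rcases lt_trichotomy i j with h | h | h
            · rw [if_pos h]
              exact mul_le_mul (hCij i j) (ih j) (abs_nonneg _) hC0
            · exact absurd h.symm hji
            · rw [if_neg (not_lt.mpr h.le), hupper i j h]
              simp
          have heq : ∑ j ∈ Finset.univ.erase i, (if i < j then C * (Δ j / 2) else 0)
              = ∑ j ∈ Finset.univ.filter (fun j => i < j), C * (Δ j / 2) := by
            rw [← Finset.sum_filter]
            congr 1
            ext j
            simp only [Finset.mem_filter, Finset.mem_erase, Finset.mem_univ, true_and,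
              and_iff_right_iff_imp]
            intro h
            exact ⟨ne_of_gt h, trivial⟩
          linarith [heq.le, heq.ge]
        have hfin : ∑ j ∈ Finset.univ.filter (fun j => i < j), C * (Δ j / 2)
            = C * (∑ j ∈ Finset.univ.filter (fun j => i < j), Δ j) / 2 := by
          rw [Finset.mul_sum, Finset.sum_div]
          apply Finset.sum_congr rfl
          intro j _
          ring
        calc |A.mulVec (x t) i| ≤ ∑ j, |A i j| * |x t j| := habs
          _ = |A i i| * |x t i| + ∑ j ∈ Finset.univ.erase i, |A i j| * |x t j| := hsplit
          _ ≤ lam * (Δ i / 2) + C * (∑ j ∈ Finset.univ.filter (fun j => i < j), Δ j) / 2 := by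
              rw [← hfin]; linarith
          _ = M i := by rw [hMi i]; ring
      have herr : |A.mulVec (x t) i - quant (M i) N (A.mulVec (x t) i)| ≤ M i / N :=
        quant_err (hMpos i) hN hrow
      have hxs : x (t + 1) i = A.mulVec (x t) i + (- quant (M i) N (A.mulVec (x t) i)) + w t i := by
        rw [hxrec t]; simp
      rw [hxs]
      have hwt := hw t i
      have hkeyi := hkey i
      have hMN : M i / N + Ω / 2 ≤ Δ i / 2 := by
        rw [hMi i, div_div]
        have heq : (lam * Δ i + C * ∑ j ∈ Finset.univ.filter (fun j => i < j), Δ j) / (2 * N)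
            = ((lam * Δ i + C * ∑ j ∈ Finset.univ.filter (fun j => i < j), Δ j) / N) / 2 := by
          ring
        rw [heq]
        linarith
      calc |A.mulVec (x t) i + (- quant (M i) N (A.mulVec (x t) i)) + w t i|
          ≤ |A.mulVec (x t) i - quant (M i) N (A.mulVec (x t) i)| + |w t i| := by
            rw [← sub_eq_add_neg]
            exact abs_add_le _ _
        _ ≤ M i / N + Ω / 2 := by linarith
        _ ≤ Δ i / 2 := hMN
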